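/- Let H be a complex Hilbert space, α, β, γ real numbers, and T, S bounded linear operators on H such that T*S is self-adjoint and αT*T + βS*S = γ·I. Then for all x, y ∈ H, αβ·‖Tx + Sy‖² + ‖βSx − αTy‖² = βγ·‖x‖² + αγ·‖y‖². -/

import Mathlib

theorem hilbert_operator_identity {H : Type*} [NormedAddCommGroup H]
    [InnerProductSpace ℂ H] [CompleteSpace H]
    (α β γ : ℝ) (T S : H →L[ℂ] H)
    (hsa : IsSelfAdjoint (ContinuousLinearMap.adjoint T * S))
    (heq : α • (ContinuousLinearMap.adjoint T * T) + β • (ContinuousLinearMap.adjoint S * S)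
      = γ • (1 : H →L[ℂ] H)) :
    ∀ x y : H, α * β * ‖T x + S y‖ ^ 2 + ‖β • S x - α • T y‖ ^ 2
      = β * γ * ‖x‖ ^ 2 + α * γ * ‖y‖ ^ 2 := by
  have key : ∀ z : H, α * ‖T z‖ ^ 2 + β * ‖S z‖ ^ 2 = γ * ‖z‖ ^ 2 := by
    intro z
    have h := congrArg (fun A : H →L[ℂ] H => RCLike.re (inner ℂ (A z) z : ℂ)) heq
    simp only [ContinuousLinearMap.add_apply, ContinuousLinearMap.smul_apply,
      ContinuousLinearMap.mul_apply, ContinuousLinearMap.one_apply,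
      ContinuousLinearMap.adjoint_inner_left, inner_add_left,
      RCLike.real_smul_eq_coe_smul (K := ℂ), inner_smul_left, RCLike.conj_ofReal,
      map_add, RCLike.mul_re, RCLike.ofReal_re, RCLike.ofReal_im,
      inner_self_eq_norm_sq, inner_self_im] at h
    simpa using h
  have cross : ∀ x y : H, RCLike.re (inner ℂ (S x) (T y) : ℂ)
      = RCLike.re (inner ℂ (T x) (S y) : ℂ) := by
    intro x y
    have h1 := hsa.isSymmetric x y
    simp only [ContinuousLinearMap.mul_apply, ContinuousLinearMap.coe_coe,
      ContinuousLinearMap.adjoint_inner_left, ContinuousLinearMap.adjoint_inner_right] at h1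
    exact congrArg RCLike.re h1
  intro x y
  have e1 : ‖T x + S y‖ ^ 2 = ‖T x‖ ^ 2 + 2 * RCLike.re (inner ℂ (T x) (S y) : ℂ) + ‖S y‖ ^ 2 :=
    norm_add_sq (𝕜 := ℂ) _ _
  have e2 : ‖β • S x - α • T y‖ ^ 2
      = β ^ 2 * ‖S x‖ ^ 2 - 2 * (α * β) * RCLike.re (inner ℂ (S x) (T y) : ℂ)
        + α ^ 2 * ‖T y‖ ^ 2 := by
    rw [RCLike.real_smul_eq_coe_smul (K := ℂ) β (S x),
      RCLike.real_smul_eq_coe_smul (K := ℂ) α (T y),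
      norm_sub_sq (𝕜 := ℂ), inner_smul_left, inner_smul_right, RCLike.conj_ofReal]
    simp only [norm_smul, RCLike.norm_ofReal, mul_pow, sq_abs,
      RCLike.mul_re, RCLike.ofReal_re, RCLike.ofReal_im]
    ring
  linear_combination α*β*e1 + e2 + β*(key x) + α*(key y) - 2*α*β*(cross x y)
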